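/- arXiv:1003.5076 — 2 statements merged into one kernel-verified Lean document; each statement's English description precedes it below -/
import Mathlib

section
/- The function v(x) = log(1/(1 + (c/8)|x|²)²) on ℝ², with c > 0, satisfies Δv = c e^v on all of ℝ² (with Δ = -∂₁₁ - ∂₂₂), v(0) = 0, and v ≤ 0 everywhere. -/
open Real

noncomputable def geomLap (f : EuclideanSpace ℝ (Fin 2) → ℝ) (x : EuclideanSpace ℝ (Fin 2)) : ℝ :=
  -∑ i : Fin 2, fderiv ℝ (fun y => fderiv ℝ f y (EuclideanSpace.single i 1)) x
      (EuclideanSpace.single i 1)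

/-- The standard Liouville bubble `v(x) = log (1/(1+(c/8)|x|²)²)` solves `Δv = c e^v`,
vanishes at the origin and is nonpositive. -/
theorem standard_bubble_solution (c : ℝ) (hc : 0 < c)
    (v : EuclideanSpace ℝ (Fin 2) → ℝ)
    (hv : ∀ x, v x = Real.log (1 / (1 + (c / 8) * ‖x‖ ^ 2) ^ 2)) :
    (∀ x, geomLap v x = c * Real.exp (v x)) ∧ v 0 = 0 ∧ ∀ x, v x ≤ 0 := by
  set a : ℝ := c / 8 with ha
  have ha0 : 0 < a := by positivity
  set Q : EuclideanSpace ℝ (Fin 2) → ℝ := fun y => 1 + a * ‖y‖ ^ 2 with hQdef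
  have hQpos : ∀ y, 0 < Q y := fun y => by
    have : (0:ℝ) ≤ a * ‖y‖ ^ 2 := by positivity
    simp only [hQdef]; linarith
  have hQne : ∀ y, Q y ≠ 0 := fun y => (hQpos y).ne'
  -- derivative of Q
  have hQ : ∀ y, HasFDerivAt Q ((2 * a) • innerSL ℝ y) y := by
    intro y
    have h1 : HasFDerivAt (fun z : EuclideanSpace ℝ (Fin 2) => ‖z‖ ^ 2)
        (2 • (innerSL ℝ y)) y := by
      simpa using (hasFDerivAt_id y).norm_sq
    have := (h1.const_mul a).const_add 1
    refine this.congr_fderiv ?_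
    ext w
    simp only [ContinuousLinearMap.smul_apply, smul_eq_mul, ContinuousLinearMap.add_apply,
      ContinuousLinearMap.zero_apply, zero_add, nsmul_eq_mul]
    push_cast; ring
  -- rewrite v
  have hv2 : v = fun y => -2 * Real.log (Q y) := by
    funext y
    rw [hv y]
    rw [one_div, Real.log_inv, Real.log_pow]
    push_cast; ring
  -- first derivative of v
  have hDv : ∀ y, HasFDerivAt v ((-4 * a / Q y) • innerSL ℝ y) y := by
    intro y
    rw [hv2]
    have := ((hQ y).log (hQne y)).const_mul (-2 : ℝ)
    refine this.congr_fderiv ?_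
    ext w
    simp only [ContinuousLinearMap.smul_apply, smul_eq_mul]
    rw [div_eq_mul_inv]
    ring
  refine ⟨?_, ?_, ?_⟩
  · intro x
    -- first derivative in coordinates
    have hg : ∀ i : Fin 2,
        (fun y => fderiv ℝ v y (EuclideanSpace.single i 1)) =
          fun y => (-4 * a * y i) * (Q y)⁻¹ := by
      intro i
      funext y
      rw [(hDv y).fderiv]
      have hin : (inner ℝ y (EuclideanSpace.single i (1:ℝ)) : ℝ) = y i := by
        rw [EuclideanSpace.inner_single_right]; simp
      simp only [ContinuousLinearMap.smul_apply, innerSL_apply_apply, smul_eq_mul, hin]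
      rw [div_eq_mul_inv]; ring
    -- second derivatives
    have hsecond : ∀ i : Fin 2,
        fderiv ℝ (fun y => fderiv ℝ v y (EuclideanSpace.single i 1)) x
          (EuclideanSpace.single i 1) =
        (-4 * a * x i) * (-(Q x ^ 2)⁻¹ * (2 * a * x i)) + (Q x)⁻¹ * (-4 * a) := by
      intro i
      rw [hg i]
      have hN : HasFDerivAt (fun y : EuclideanSpace ℝ (Fin 2) => -4 * a * y i)
          ((-4 * a) • (EuclideanSpace.proj i : EuclideanSpace ℝ (Fin 2) →L[ℝ] ℝ)) x := by
        simpa using ((EuclideanSpace.proj i :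
          EuclideanSpace ℝ (Fin 2) →L[ℝ] ℝ).hasFDerivAt (x := x)).const_mul (-4 * a)
      have hInv : HasFDerivAt (fun y => (Q y)⁻¹)
          ((-(Q x ^ 2)⁻¹) • ((2 * a) • innerSL ℝ x)) x :=
        (hasDerivAt_inv (hQne x)).comp_hasFDerivAt x (hQ x)
      have hmul := hN.mul hInv
      rw [show (fun y => -4 * a * y i * (Q y)⁻¹) = ((fun y => -4 * a * y i) * fun y => (Q y)⁻¹) from rfl, hmul.fderiv]
      have h1 : (EuclideanSpace.proj i : EuclideanSpace ℝ (Fin 2) →L[ℝ] ℝ)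
          (EuclideanSpace.single i 1) = 1 := by simp
      have h2 : (inner ℝ x (EuclideanSpace.single i (1:ℝ)) : ℝ) = x i := by
        rw [EuclideanSpace.inner_single_right]; simp
      simp only [ContinuousLinearMap.add_apply, ContinuousLinearMap.smul_apply,
        innerSL_apply_apply, smul_eq_mul, h1, h2]
      ring
    have hnorm : x 0 ^ 2 + x 1 ^ 2 = ‖x‖ ^ 2 := by
      have h := @real_inner_self_eq_norm_sq (EuclideanSpace ℝ (Fin 2)) _ _ x
      rw [← h]
      simp only [PiLp.inner_apply, Fin.sum_univ_two, RCLike.inner_apply, conj_trivial]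
      ring
    have hexp : Real.exp (v x) = 1 / (Q x) ^ 2 := by
      rw [hv x, Real.exp_log (by positivity)]
    rw [hexp]
    have hq : Q x = 1 + a * (x 0 ^ 2 + x 1 ^ 2) := by rw [hnorm]
    have hPne : (1 + a * (x 0 ^ 2 + x 1 ^ 2)) ≠ 0 := hq ▸ hQne x
    simp only [geomLap, Fin.sum_univ_two, hsecond 0, hsecond 1, hq]
    rw [ha]
    field_simp
    ring
  · rw [hv 0]; simp
  · intro x
    rw [hv x]
    apply Real.log_nonpos
    · positivity
    · rw [div_le_one (by positivity)]
      nlinarith [sq_nonneg ‖x‖, sq_nonneg (a * ‖x‖^2)]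
end

section
/- For the standard bubble v(x) = -2 log(1 + (c/8)|x|²) with c > 0 and any 0 < λ < √(8/c), the function w_λ(x) = v(x) - v(λ²x/|x|²) - 4 log(λ/|x|) is strictly positive for all |x| > λ and vanishes on |x| = λ. -/
open Real

/-- For the standard bubble and any `0 < λ < √(8/c)`, the function
`w_λ(x) = v(x) - v(λ²x/|x|²) - 4 log(λ/|x|)` is strictly positive for `|x| > λ`
and vanishes on `|x| = λ`. -/
theorem bubble_moving_plane_positivity (c : ℝ) (hc : 0 < c)
    (v : EuclideanSpace ℝ (Fin 2) → ℝ)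
    (hv : ∀ x, v x = -2 * Real.log (1 + (c / 8) * ‖x‖ ^ 2)) :
    ∀ lam : ℝ, 0 < lam → lam < Real.sqrt (8 / c) →
      (∀ x : EuclideanSpace ℝ (Fin 2), lam < ‖x‖ →
        0 < v x - v ((lam ^ 2 / ‖x‖ ^ 2) • x) - 4 * Real.log (lam / ‖x‖)) ∧
      (∀ x : EuclideanSpace ℝ (Fin 2), ‖x‖ = lam →
        v x - v ((lam ^ 2 / ‖x‖ ^ 2) • x) - 4 * Real.log (lam / ‖x‖) = 0) := by
  intro lam hlam hlamc
  have hlam_sq : lam ^ 2 < 8 / c := (Real.lt_sqrt hlam.le).mp hlamc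
  have hclam : c * lam ^ 2 < 8 := by
    rw [lt_div_iff₀ hc] at hlam_sq; linarith [hlam_sq]
  constructor
  · intro x hx
    have hr : 0 < ‖x‖ := hlam.trans hx
    have hnorm : ‖(lam ^ 2 / ‖x‖ ^ 2) • x‖ = lam ^ 2 / ‖x‖ := by
      rw [norm_smul, Real.norm_eq_abs, abs_of_pos (by positivity)]
      field_simp
    rw [hv, hv, hnorm]
    have hA : (0:ℝ) < 1 + c / 8 * ‖x‖ ^ 2 := by positivity
    have hB : (0:ℝ) < 1 + c / 8 * (lam ^ 2 / ‖x‖) ^ 2 := by positivity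
    have key : (1 + c / 8 * ‖x‖ ^ 2) * lam ^ 2
        < (1 + c / 8 * (lam ^ 2 / ‖x‖) ^ 2) * ‖x‖ ^ 2 := by
      have h1 : (1 + c / 8 * (lam ^ 2 / ‖x‖) ^ 2) * ‖x‖ ^ 2
          = ‖x‖ ^ 2 + c / 8 * lam ^ 4 := by field_simp
      rw [h1]
      nlinarith [mul_pos (sub_pos.mpr (by nlinarith : lam ^ 2 < ‖x‖ ^ 2))
        (sub_pos.mpr hclam)]
    have hlog := Real.log_lt_log (by positivity) key
    rw [Real.log_mul hA.ne' (by positivity), Real.log_mul hB.ne' (by positivity),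
      Real.log_pow, Real.log_pow] at hlog
    rw [Real.log_div hlam.ne' hr.ne']
    push_cast at hlog
    linarith
  · intro x hx
    have hr : 0 < ‖x‖ := by rw [hx]; exact hlam
    have h1 : lam ^ 2 / ‖x‖ ^ 2 = 1 := by rw [hx]; field_simp
    rw [h1, one_smul, hx, div_self hlam.ne', Real.log_one]
    ring
end
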